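/- Let Ω ⊂ ℝ^N be a bounded open set, Y = [0,1]^N, p ∈ (1,∞), u_ε a sequence in L^p(Ω) and u_0 ∈ L^p(Ω×Y) such that u_ε two-scale converges weakly to u_0. Then u_ε converges weakly in L^p(Ω) to the function u defined by u(x) = ∫_Y u_0(x,y) dy, and the sequence u_ε is bounded in L^p(Ω), i.e. sup_ε ‖u_ε‖_{L^p(Ω)} < ∞. -/

import Mathlib

open MeasureTheory Filter Topology Set
open scoped Classical

noncomputable section

/-- The unit cell `Y = [0,1]^N`. -/
def cube (N : ℕ) : Set (Fin N → ℝ) := {y | ∀ i, 0 ≤ y i ∧ y i ≤ 1}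

/-- The cell `k + εY`. -/
def cellOf {N : ℕ} (ε : ℝ) (k : Fin N → ℤ) : Set (Fin N → ℝ) :=
  {x | ∀ i, ε * (k i : ℝ) ≤ x i ∧ x i ≤ ε * (k i : ℝ) + ε}

/-- The indices of cells entirely contained in the closure of `Ω`. -/
def goodCells {N : ℕ} (ε : ℝ) (Ω : Set (Fin N → ℝ)) : Set (Fin N → ℤ) :=
  {k | cellOf ε k ⊆ closure Ω}

/-- `Ω̃_ε`, the interior of the union of the cells contained in `closure Ω`. -/
def tildeOmega {N : ℕ} (ε : ℝ) (Ω : Set (Fin N → ℝ)) : Set (Fin N → ℝ) :=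
  interior (⋃ k ∈ goodCells ε Ω, cellOf ε k)

/-- The unfolding operator `T_ε`. -/
def unfoldOp {N : ℕ} (ε : ℝ) (Ω : Set (Fin N → ℝ)) (φ : (Fin N → ℝ) → ℝ) :
    (Fin N → ℝ) × (Fin N → ℝ) → ℝ := fun z =>
  if z.1 ∈ tildeOmega ε Ω then φ (fun i => ε * (⌊z.1 i / ε⌋ : ℝ) + ε * z.2 i) else φ z.1

/-- Weak two-scale convergence over the macroscopic domain `U`, with test functions
in `L^q(U; C_#(Y))`. -/
def TwoScaleCvgW {N : ℕ} (q : ℝ) (ε : ℕ → ℝ) (U : Set (Fin N → ℝ))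
    (u : ℕ → (Fin N → ℝ) → ℝ) (u0 : (Fin N → ℝ) → (Fin N → ℝ) → ℝ) : Prop :=
  ∀ φ : (Fin N → ℝ) → (Fin N → ℝ) → ℝ,
    (∀ y, AEMeasurable (fun x => φ x y) (volume.restrict U)) →
    (∀ x, Continuous (φ x)) →
    (∀ x (y : Fin N → ℝ) (k : Fin N → ℤ), φ x (y + fun i => (k i : ℝ)) = φ x y) →
    MemLp (fun x => sSup ((fun y => |φ x y|) '' cube N)) (ENNReal.ofReal q)
      (volume.restrict U) →
    Tendsto (fun n => ∫ x in U, u n x * φ x ((ε n)⁻¹ • x)) atTop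
      (𝓝 (∫ x in U, ∫ y in cube N, u0 x y * φ x y))

/-- Strong two-scale convergence in `L^p` over the macroscopic domain `U`. -/
def TwoScaleCvgS {N : ℕ} (p q : ℝ) (ε : ℕ → ℝ) (U : Set (Fin N → ℝ))
    (u : ℕ → (Fin N → ℝ) → ℝ) (u0 : (Fin N → ℝ) → (Fin N → ℝ) → ℝ) : Prop :=
  TwoScaleCvgW q ε U u u0 ∧
    Tendsto (fun n => eLpNorm (u n) (ENNReal.ofReal p) (volume.restrict U)) atTop
      (𝓝 (eLpNorm (fun z : (Fin N → ℝ) × (Fin N → ℝ) => u0 z.1 z.2) (ENNReal.ofReal p)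
        ((volume.restrict U).prod (volume.restrict (cube N)))))

/-- Smooth admissible test functions: smooth, compactly supported in `x` within `Ω`,
`Y`-periodic in `y`. -/
def SmoothTest {N : ℕ} (Ω : Set (Fin N → ℝ)) (φ : (Fin N → ℝ) → (Fin N → ℝ) → ℝ) : Prop :=
  ContDiff ℝ (⊤ : ℕ∞) (fun z : (Fin N → ℝ) × (Fin N → ℝ) => φ z.1 z.2) ∧
  (∃ K : Set (Fin N → ℝ), IsCompact K ∧ K ⊆ Ω ∧ ∀ x ∉ K, ∀ y, φ x y = 0) ∧
  ∀ x (y : Fin N → ℝ) (k : Fin N → ℤ), φ x (y + fun i => (k i : ℝ)) = φ x y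

/-- Distributional two-scale convergence. -/
def TwoScaleCvgD {N : ℕ} (ε : ℕ → ℝ) (Ω : Set (Fin N → ℝ))
    (u : ℕ → (Fin N → ℝ) → ℝ) (u0 : (Fin N → ℝ) → (Fin N → ℝ) → ℝ) : Prop :=
  ∀ φ : (Fin N → ℝ) → (Fin N → ℝ) → ℝ, SmoothTest Ω φ →
    Tendsto (fun n => ∫ x in Ω, u n x * φ x ((ε n)⁻¹ • x)) atTop
      (𝓝 (∫ x in Ω, ∫ y in cube N, u0 x y * φ x y))



/-- A weakly two-scale convergent sequence converges weakly in `L^p(Ω)`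
to the `Y`-average of the two-scale limit and is bounded in `L^p(Ω)`. -/
theorem stmt5 {N : ℕ} (Ω : Set (Fin N → ℝ)) (hΩo : IsOpen Ω)
    (hΩb : Bornology.IsBounded Ω)
    (ε : ℕ → ℝ) (hεpos : ∀ n, 0 < ε n) (hε0 : Tendsto ε atTop (𝓝 0))
    (p q : ℝ) (hp : 1 < p) (hpq : 1/p + 1/q = 1)
    (u : ℕ → (Fin N → ℝ) → ℝ) (hu : ∀ n, MemLp (u n) (ENNReal.ofReal p) (volume.restrict Ω))
    (u0 : (Fin N → ℝ) → (Fin N → ℝ) → ℝ)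
    (hu0 : MemLp (fun z : (Fin N → ℝ) × (Fin N → ℝ) => u0 z.1 z.2) (ENNReal.ofReal p) ((volume.restrict Ω).prod (volume.restrict (cube N))))
    (hcvg : TwoScaleCvgW q ε Ω u u0) :
    (∀ g : (Fin N → ℝ) → ℝ, MemLp g (ENNReal.ofReal q) (volume.restrict Ω) →
      Tendsto (fun n => ∫ x in Ω, u n x * g x) atTop
        (𝓝 (∫ x in Ω, (∫ y in cube N, u0 x y) * g x))) ∧
    ∃ C : ENNReal, C < ⊤ ∧ ∀ n, eLpNorm (u n) (ENNReal.ofReal p) (volume.restrict Ω) ≤ C := by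
  have hc : p.HolderConjugate q := Real.holderConjugate_iff.mpr ⟨hp, by rw [← one_div, ← one_div]; exact hpq⟩
  set μ := volume.restrict Ω with hμ
  set P := ENNReal.ofReal p with hP
  set Q := ENNReal.ofReal q with hQ
  have hq1 : 1 < q := hc.symm.lt
  have hp0 : (0:ℝ) < p := hc.pos
  have hq0 : (0:ℝ) < q := hc.symm.pos
  have hP0 : P ≠ 0 := by simp [hP, ENNReal.ofReal_eq_zero, not_le, hp0]
  have hPtop : P ≠ ⊤ := ENNReal.ofReal_ne_top
  have hQ0 : Q ≠ 0 := by simp [hQ, ENNReal.ofReal_eq_zero, not_le, hq0]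
  have hQtop : Q ≠ ⊤ := ENNReal.ofReal_ne_top
  have hPt : P.toReal = p := ENNReal.toReal_ofReal hp0.le
  have hQt : Q.toReal = q := ENNReal.toReal_ofReal hq0.le
  haveI : Fact (1 ≤ Q) := ⟨ENNReal.one_le_ofReal.mpr hq1.le⟩
  -- Part 1: weak convergence against any `g ∈ L^q`.
  have part1 : ∀ g : (Fin N → ℝ) → ℝ, MemLp g Q μ →
      Tendsto (fun n => ∫ x in Ω, u n x * g x) atTop
        (𝓝 (∫ x in Ω, (∫ y in cube N, u0 x y) * g x)) := by
    intro g hg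
    have hcube : (0 : Fin N → ℝ) ∈ cube N := fun i => ⟨le_refl _, zero_le_one⟩
    have h := hcvg (fun x _ => g x) (fun _ => hg.1.aemeasurable) (fun _ => continuous_const)
      (fun _ _ _ => rfl) ?_
    · simp_rw [integral_mul_const] at h
      exact h
    · have heq : (fun x => sSup ((fun _ : Fin N → ℝ => |g x|) '' cube N)) = fun x => |g x| := by
        funext x
        rw [Set.Nonempty.image_const ⟨0, hcube⟩, csSup_singleton]
      rw [heq]
      have := hg.norm
      simpa [Real.norm_eq_abs] using this
  -- Integrability of products.
  have hmul : ∀ n (g : (Fin N → ℝ) → ℝ), MemLp g Q μ →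
      Integrable (fun x => u n x * g x) μ := by
    intro n g hg
    have h1 : (1:ENNReal)/1 = 1/P + 1/Q := by
      rw [one_div, one_div, one_div, inv_one, hP, hQ, hc.inv_add_inv_ennreal]
    have h2 : MemLp (u n • g) 1 μ := by
      haveI : ENNReal.HolderTriple P Q 1 := ⟨by simpa only [one_div] using h1.symm⟩
      exact hg.smul (hu n)
    exact memLp_one_iff_integrable.mp h2
  -- Hölder bound.
  have hbound : ∀ n (g : Lp ℝ Q μ),
      ‖∫ x, u n x * g x ∂μ‖ ≤ (eLpNorm (u n) P μ).toReal * ‖g‖ := by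
    intro n g
    have hg : MemLp (g : (Fin N → ℝ) → ℝ) Q μ := Lp.memLp g
    have h1 : ‖∫ x, u n x * g x ∂μ‖ ≤ ∫ x, ‖u n x‖ * ‖(g : (Fin N → ℝ) → ℝ) x‖ ∂μ := by
      refine (norm_integral_le_integral_norm _).trans_eq ?_
      refine integral_congr_ae (Eventually.of_forall fun x => ?_)
      simp [Real.norm_eq_abs, abs_mul]
    have h2 := integral_mul_norm_le_Lp_mul_Lq hc (hu n) hg
    have e1 : (eLpNorm (u n) P μ).toReal = (∫ x, ‖u n x‖ ^ p ∂μ) ^ (1/p) := by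
      rw [(hu n).eLpNorm_eq_integral_rpow_norm hP0 hPtop, hPt,
        ENNReal.toReal_ofReal (Real.rpow_nonneg
          (integral_nonneg fun x => Real.rpow_nonneg (norm_nonneg _) _) _), one_div]
    have e2 : ‖g‖ = (∫ x, ‖(g : (Fin N → ℝ) → ℝ) x‖ ^ q ∂μ) ^ (1/q) := by
      rw [Lp.norm_def, hg.eLpNorm_eq_integral_rpow_norm hQ0 hQtop, hQt,
        ENNReal.toReal_ofReal (Real.rpow_nonneg
          (integral_nonneg fun x => Real.rpow_nonneg (norm_nonneg _) _) _), one_div]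
    rw [e1, e2]
    exact h1.trans h2
  -- The family of continuous linear functionals.
  have hTex : ∀ n, ∃ T : Lp ℝ Q μ →L[ℝ] ℝ,
      ∀ g : Lp ℝ Q μ, T g = ∫ x, u n x * g x ∂μ := by
    intro n
    refine ⟨LinearMap.mkContinuous
      { toFun := fun g : Lp ℝ Q μ => ∫ x, u n x * g x ∂μ
        map_add' := fun g h => by
          calc ∫ x, u n x * (↑(g + h) : (Fin N → ℝ) → ℝ) x ∂μ
              = ∫ x, (u n x * g x + u n x * h x) ∂μ :=
                integral_congr_ae ((Lp.coeFn_add g h).mono fun x hx => by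
                  simp only [hx, Pi.add_apply, mul_add])
            _ = (∫ x, u n x * g x ∂μ) + ∫ x, u n x * h x ∂μ :=
                integral_add (hmul n _ (Lp.memLp g)) (hmul n _ (Lp.memLp h))
        map_smul' := fun c g => by
          simp only [RingHom.id_apply, smul_eq_mul]
          calc ∫ x, u n x * (↑(c • g) : (Fin N → ℝ) → ℝ) x ∂μ
              = ∫ x, c * (u n x * g x) ∂μ :=
                integral_congr_ae ((Lp.coeFn_smul c g).mono fun x hx => by
                  simp only [hx, Pi.smul_apply, smul_eq_mul]; ring)
            _ = c * ∫ x, u n x * g x ∂μ := integral_const_mul c _ }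
      ((eLpNorm (u n) P μ).toReal) (fun g => hbound n g), fun g => rfl⟩
  choose T hT using hTex
  -- Pointwise boundedness via Part 1.
  have hpb : ∀ g : Lp ℝ Q μ, ∃ C : ℝ, ∀ n, ‖T n g‖ ≤ C := by
    intro g
    have ht := part1 _ (Lp.memLp g)
    obtain ⟨C, hC⟩ := ht.norm.bddAbove_range
    refine ⟨C, fun n => ?_⟩
    rw [hT n g]
    exact hC (Set.mem_range_self n)
  obtain ⟨C', hC'⟩ := banach_steinhaus hpb
  -- Lower bound on the operator norm.
  have hlow : ∀ n, eLpNorm (u n) P μ ≤ ENNReal.ofReal ‖T n‖ := by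
    intro n
    have hInn : (0:ℝ) ≤ ∫ x, |u n x| ^ p ∂μ :=
      integral_nonneg fun x => Real.rpow_nonneg (abs_nonneg _) _
    set I := ∫ x, |u n x| ^ p ∂μ with hI
    have heLp : eLpNorm (u n) P μ = ENNReal.ofReal (I ^ (1/p)) := by
      rw [(hu n).eLpNorm_eq_integral_rpow_norm hP0 hPtop, hPt, one_div]
      congr 2
    rcases eq_or_lt_of_le hInn with hI0 | hIpos
    · rw [heLp, ← hI0, Real.zero_rpow (by positivity : (1:ℝ)/p ≠ 0), ENNReal.ofReal_zero]
      exact zero_le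
    · have hpm1 : (0:ℝ) < p - 1 := by linarith
      set g0 : (Fin N → ℝ) → ℝ := fun x => |u n x| ^ (p - 2) * u n x with hg0
      have hnorm_g0 : ∀ x, ‖g0 x‖ = ‖u n x‖ ^ (p - 1) := by
        intro x
        rcases eq_or_ne (u n x) 0 with h0 | h0
        · simp [hg0, h0, Real.zero_rpow hpm1.ne']
        · have habs : 0 < |u n x| := abs_pos.mpr h0
          rw [hg0]
          simp only [Real.norm_eq_abs, abs_mul,
            abs_of_nonneg (Real.rpow_nonneg (abs_nonneg (u n x)) (p - 2))]
          have e : |u n x| ^ (p - 2 + 1) = |u n x| ^ (p-2) * |u n x| := by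
            rw [Real.rpow_add habs, Real.rpow_one]
          rw [← e]
          congr 1
          ring
      have hg0meas : AEStronglyMeasurable g0 μ :=
        (((hu n).1.norm.aemeasurable.pow_const (p - 2)).mono_ac
            Measure.AbsolutelyContinuous.rfl).mul (hu n).1.aemeasurable
          |>.aestronglyMeasurable |>.congr (Eventually.of_forall fun x => by
            simp [hg0, Real.norm_eq_abs])
      have hmem_abs : MemLp (fun x => ‖u n x‖ ^ (p - 1)) Q μ := by
        have h1 := (hu n).norm_rpow_div (ENNReal.ofReal (p - 1))
        rw [ENNReal.toReal_ofReal hpm1.le] at h1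
        have hdiv : P / ENNReal.ofReal (p - 1) = Q := by
          rw [hP, hQ, ← ENNReal.ofReal_div_of_pos hpm1, hc.conjugate_eq]
        rwa [hdiv] at h1
      have hg0mem : MemLp g0 Q μ := by
        rw [← memLp_norm_iff hg0meas]
        have heq2 : (fun x => ‖g0 x‖) = fun x => ‖u n x‖ ^ (p - 1) := funext hnorm_g0
        rw [heq2]
        exact hmem_abs
      set G := hg0mem.toLp g0 with hG
      have hval : T n G = I := by
        rw [hT n G, hI]
        refine integral_congr_ae ((hg0mem.coeFn_toLp).mono fun x hx => ?_)
        simp only [hG, hx]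
        simp only [hg0]
        rcases eq_or_ne (u n x) 0 with h0 | h0
        · simp [h0, Real.zero_rpow hp0.ne']
        · have habs : 0 < |u n x| := abs_pos.mpr h0
          have e2 : u n x * (|u n x| ^ (p-2) * u n x) = |u n x| ^ (p-2) * (|u n x| * |u n x|) := by
            rw [abs_mul_abs_self]; ring
          rw [e2]
          have e3 : |u n x| ^ (p - 2 + 1 + 1) = |u n x| ^ (p - 2) * (|u n x| * |u n x|) := by
            rw [Real.rpow_add habs, Real.rpow_add habs, Real.rpow_one]; ring
          rw [← e3]
          congr 1
          ring
      have hIg : ∫ x, ‖g0 x‖ ^ q ∂μ = I := by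
        rw [hI]
        refine integral_congr_ae (Eventually.of_forall fun x => ?_)
        show ‖g0 x‖ ^ q = |u n x| ^ p
        rw [hnorm_g0 x, ← Real.rpow_mul (norm_nonneg _), hc.sub_one_mul_conj, Real.norm_eq_abs]
      have hnormG : ‖G‖ = I ^ (1/q) := by
        rw [hG, Lp.norm_toLp, hg0mem.eLpNorm_eq_integral_rpow_norm hQ0 hQtop, hQt,
          ENNReal.toReal_ofReal (Real.rpow_nonneg
            (integral_nonneg fun x => Real.rpow_nonneg (norm_nonneg _) _) _), hIg, one_div]
      have hle : I ≤ ‖T n‖ * I ^ (1/q) := by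
        calc I = T n G := hval.symm
          _ ≤ |T n G| := le_abs_self _
          _ ≤ ‖T n‖ * ‖G‖ := by rw [← Real.norm_eq_abs]; exact (T n).le_opNorm G
          _ = ‖T n‖ * I ^ (1/q) := by rw [hnormG]
      have hqpos : (0:ℝ) < I ^ (1/q) := Real.rpow_pos_of_pos hIpos _
      have hfinal : I ^ (1/p) ≤ ‖T n‖ := by
        have hmul2 : I ^ (1/p) * I ^ (1/q) = I := by
          rw [← Real.rpow_add hIpos, hpq, Real.rpow_one]
        nth_rewrite 1 [← hmul2] at hle
        exact le_of_mul_le_mul_right hle hqpos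
      rw [heLp]
      exact ENNReal.ofReal_le_ofReal hfinal
  refine ⟨part1, ENNReal.ofReal C', ENNReal.ofReal_lt_top, fun n => ?_⟩
  exact (hlow n).trans (ENNReal.ofReal_le_ofReal (hC' n))

end
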